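/- Let v₁, v₂, v₃ ∈ ℝ³ be the vertices of an equilateral triangle lying in a plane H, and let v₄, v₅ ∈ ℝ³ be reflections of one another through H, not lying in H, each equidistant from v₁, v₂, v₃ (a triangular bipyramid). Set ε = ∠(v₁, v₄, v₂). Then: (i) all six apex face angles ∠(vᵢ, v₄, vⱼ) and ∠(vᵢ, v₅, vⱼ) (1 ≤ i < j ≤ 3) equal ε; (ii) the angle deficit at v₄, defined as 2π − (∠(v₁,v₄,v₂) + ∠(v₂,v₄,v₃) + ∠(v₃,v₄,v₁)), equals 2π − 3ε, and likewise at v₅; (iii) the angle deficit at each equatorial vertex vᵢ, defined as 2π − (∠(vⱼ,vᵢ,v₄) + ∠(vₖ,vᵢ,v₄) + ∠(vⱼ,vᵢ,v₅) + ∠(vₖ,vᵢ,v₅)) where {j,k} = {1,2,3}\{i}, equals 2ε. Consequently, if 0 < ε < π/3, exactly two of the five vertices have angle deficit ≥ π. -/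

import Mathlib

open EuclideanGeometry Real

/-- SSS: an angle is determined by the three side lengths. -/
lemma angle_eq_of_dists {a b c a' b' c' : EuclideanSpace ℝ (Fin 3)}
    (hab : a ≠ b) (hcb : c ≠ b)
    (h1 : dist a b = dist a' b') (h2 : dist c b = dist c' b')
    (h3 : dist a c = dist a' c') : ∠ a b c = ∠ a' b' c' := by
  have hd1 : (0:ℝ) < dist a b := dist_pos.2 hab
  have hd2 : (0:ℝ) < dist c b := dist_pos.2 hcb
  have l1 := EuclideanGeometry.law_cos a b c
  have l2 := EuclideanGeometry.law_cos a' b' c'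
  rw [h1, h2, h3] at l1
  have hk : (0:ℝ) < 2 * dist a' b' * dist c' b' := by
    rw [← h1, ← h2]; positivity
  have hcos : Real.cos (∠ a b c) = Real.cos (∠ a' b' c') := by
    have h : 2 * dist a' b' * dist c' b' * Real.cos (∠ a b c) =
        2 * dist a' b' * dist c' b' * Real.cos (∠ a' b' c') := by linarith
    exact mul_left_cancel₀ (ne_of_gt hk) h
  exact Real.injOn_cos ⟨angle_nonneg _ _ _, angle_le_pi _ _ _⟩
    ⟨angle_nonneg _ _ _, angle_le_pi _ _ _⟩ hcos

/-- A triangular bipyramid over an equilateral base: all six apex face angles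
equal `ε`, both apexes have angle deficit `2π − 3ε`, each equatorial vertex
has angle deficit `2ε`; hence for `0 < ε < π/3` exactly the two apexes (of the
five vertices) have angle deficit at least `π`. -/
theorem bipyramid_two_sharp
    (v₁ v₂ v₃ v₄ v₅ : EuclideanSpace ℝ (Fin 3)) (s : ℝ) (hs : 0 < s)
    (h12 : dist v₁ v₂ = s) (h23 : dist v₂ v₃ = s) (h31 : dist v₃ v₁ = s)
    (H : AffineSubspace ℝ (EuclideanSpace ℝ (Fin 3)))
    [Nonempty H] [Submodule.HasOrthogonalProjection H.direction]
    (hplane : Module.finrank ℝ H.direction = 2)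
    (h1H : v₁ ∈ H) (h2H : v₂ ∈ H) (h3H : v₃ ∈ H) (h4H : v₄ ∉ H)
    (h5 : v₅ = EuclideanGeometry.reflection H v₄)
    (heq4 : dist v₄ v₁ = dist v₄ v₂ ∧ dist v₄ v₂ = dist v₄ v₃)
    (heq5 : dist v₅ v₁ = dist v₅ v₂ ∧ dist v₅ v₂ = dist v₅ v₃)
    (ε : ℝ) (hε : ε = ∠ v₁ v₄ v₂) :
    (∠ v₁ v₄ v₂ = ε ∧ ∠ v₂ v₄ v₃ = ε ∧ ∠ v₃ v₄ v₁ = ε ∧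
     ∠ v₁ v₅ v₂ = ε ∧ ∠ v₂ v₅ v₃ = ε ∧ ∠ v₃ v₅ v₁ = ε) ∧
    (2 * π - (∠ v₁ v₄ v₂ + ∠ v₂ v₄ v₃ + ∠ v₃ v₄ v₁) = 2 * π - 3 * ε ∧
     2 * π - (∠ v₁ v₅ v₂ + ∠ v₂ v₅ v₃ + ∠ v₃ v₅ v₁) = 2 * π - 3 * ε) ∧
    (2 * π - (∠ v₂ v₁ v₄ + ∠ v₃ v₁ v₄ + ∠ v₂ v₁ v₅ + ∠ v₃ v₁ v₅) = 2 * ε ∧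
     2 * π - (∠ v₁ v₂ v₄ + ∠ v₃ v₂ v₄ + ∠ v₁ v₂ v₅ + ∠ v₃ v₂ v₅) = 2 * ε ∧
     2 * π - (∠ v₁ v₃ v₄ + ∠ v₂ v₃ v₄ + ∠ v₁ v₃ v₅ + ∠ v₂ v₃ v₅) = 2 * ε) ∧
    (0 < ε → ε < π / 3 →
      (2 * π - (∠ v₁ v₄ v₂ + ∠ v₂ v₄ v₃ + ∠ v₃ v₄ v₁) ≥ π ∧
       2 * π - (∠ v₁ v₅ v₂ + ∠ v₂ v₅ v₃ + ∠ v₃ v₅ v₁) ≥ π ∧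
       2 * π - (∠ v₂ v₁ v₄ + ∠ v₃ v₁ v₄ + ∠ v₂ v₁ v₅ + ∠ v₃ v₁ v₅) < π ∧
       2 * π - (∠ v₁ v₂ v₄ + ∠ v₃ v₂ v₄ + ∠ v₁ v₂ v₅ + ∠ v₃ v₂ v₅) < π ∧
       2 * π - (∠ v₁ v₃ v₄ + ∠ v₂ v₃ v₄ + ∠ v₁ v₃ v₅ + ∠ v₂ v₃ v₅) < π)) := by
  have h41 : v₄ ≠ v₁ := fun h => h4H (h ▸ h1H)
  set r : ℝ := dist v₄ v₁ with hr
  have hrpos : 0 < r := dist_pos.2 h41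
  have d42 : dist v₄ v₂ = r := heq4.1.symm
  have d43 : dist v₄ v₃ = r := by rw [← heq4.2]; exact d42
  have d51 : dist v₅ v₁ = r := by
    rw [dist_comm, h5, dist_reflection_eq_of_mem H h1H, dist_comm]
  have d52 : dist v₅ v₂ = r := by
    rw [dist_comm, h5, dist_reflection_eq_of_mem H h2H, dist_comm]; exact d42
  have d53 : dist v₅ v₃ = r := by
    rw [dist_comm, h5, dist_reflection_eq_of_mem H h3H, dist_comm]; exact d43
  -- all apex angles equal ε
  have apex : ∀ a b c : EuclideanSpace ℝ (Fin 3),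
      dist c a = r → dist c b = r → dist a b = s → ∠ a c b = ε := by
    intro a b c hca hcb habs
    have hac : a ≠ c := (dist_pos.1 (by rw [hca]; exact hrpos)).symm
    have hbc : b ≠ c := (dist_pos.1 (by rw [hcb]; exact hrpos)).symm
    rw [hε]
    exact angle_eq_of_dists hac hbc
      (by rw [dist_comm a c, hca, dist_comm v₁ v₄])
      (by rw [dist_comm b c, hcb, dist_comm v₂ v₄, d42])
      (by rw [habs, h12])
  -- each base angle equals (π - ε)/2
  have base : ∀ a b c : EuclideanSpace ℝ (Fin 3),
      dist a b = s → dist c a = r → dist c b = r → ∠ a b c = (π - ε) / 2 := by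
    intro a b c habs hca hcb
    have hac : a ≠ c := (dist_pos.1 (by rw [hca]; exact hrpos)).symm
    have hbc : b ≠ c := (dist_pos.1 (by rw [hcb]; exact hrpos)).symm
    have hsum := EuclideanGeometry.angle_add_angle_add_angle_eq_pi (p₁ := c) b hac
    have hiso : ∠ c a b = ∠ c b a := EuclideanGeometry.angle_eq_angle_of_dist_eq
      (by rw [hca, hcb])
    have hap : ∠ b c a = ε := by rw [EuclideanGeometry.angle_comm]; exact apex a b c hca hcb habs
    rw [EuclideanGeometry.angle_comm c b a] at hiso
    linarith
  have a12 : ∠ v₁ v₄ v₂ = ε := apex v₁ v₂ v₄ rfl d42 h12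
  have a23 : ∠ v₂ v₄ v₃ = ε := apex v₂ v₃ v₄ d42 d43 h23
  have a31 : ∠ v₃ v₄ v₁ = ε := apex v₃ v₁ v₄ d43 rfl h31
  have b12 : ∠ v₁ v₅ v₂ = ε := apex v₁ v₂ v₅ d51 d52 h12
  have b23 : ∠ v₂ v₅ v₃ = ε := apex v₂ v₃ v₅ d52 d53 h23
  have b31 : ∠ v₃ v₅ v₁ = ε := apex v₃ v₁ v₅ d53 d51 h31
  have d21 : dist v₂ v₁ = s := by rw [dist_comm]; exact h12
  have d32 : dist v₃ v₂ = s := by rw [dist_comm]; exact h23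
  have d13 : dist v₁ v₃ = s := by rw [dist_comm]; exact h31
  have e214 : ∠ v₂ v₁ v₄ = (π - ε) / 2 := base v₂ v₁ v₄ d21 d42 rfl
  have e314 : ∠ v₃ v₁ v₄ = (π - ε) / 2 := base v₃ v₁ v₄ h31 d43 rfl
  have e215 : ∠ v₂ v₁ v₅ = (π - ε) / 2 := base v₂ v₁ v₅ d21 d52 d51
  have e315 : ∠ v₃ v₁ v₅ = (π - ε) / 2 := base v₃ v₁ v₅ h31 d53 d51
  have e124 : ∠ v₁ v₂ v₄ = (π - ε) / 2 := base v₁ v₂ v₄ h12 rfl d42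
  have e324 : ∠ v₃ v₂ v₄ = (π - ε) / 2 := base v₃ v₂ v₄ d32 d43 d42
  have e125 : ∠ v₁ v₂ v₅ = (π - ε) / 2 := base v₁ v₂ v₅ h12 d51 d52
  have e325 : ∠ v₃ v₂ v₅ = (π - ε) / 2 := base v₃ v₂ v₅ d32 d53 d52
  have e134 : ∠ v₁ v₃ v₄ = (π - ε) / 2 := base v₁ v₃ v₄ d13 rfl d43
  have e234 : ∠ v₂ v₃ v₄ = (π - ε) / 2 := base v₂ v₃ v₄ h23 d42 d43
  have e135 : ∠ v₁ v₃ v₅ = (π - ε) / 2 := base v₁ v₃ v₅ d13 d51 d53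
  have e235 : ∠ v₂ v₃ v₅ = (π - ε) / 2 := base v₂ v₃ v₅ h23 d52 d53
  refine ⟨⟨a12, a23, a31, b12, b23, b31⟩, ⟨by rw [a12, a23, a31]; ring,
    by rw [b12, b23, b31]; ring⟩,
    ⟨by rw [e214, e314, e215, e315]; ring, by rw [e124, e324, e125, e325]; ring,
     by rw [e134, e234, e135, e235]; ring⟩, ?_⟩
  intro hε0 hε3
  have hπ := Real.pi_pos
  refine ⟨by rw [a12, a23, a31]; linarith, by rw [b12, b23, b31]; linarith,
    by rw [e214, e314, e215, e315]; linarith,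
    by rw [e124, e324, e125, e325]; linarith,
    by rw [e134, e234, e135, e235]; linarith⟩
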